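/- Let s₁ = b₁e₁ + b₂e₂ and s₂ = b₃e₁ + b₄e₂ (e₁ = (1,0), e₂ = (1/2,√3/2)), and let s₁', s₂' and s₁'', s₂'' denote their simultaneous rotations by 2π/3 and 4π/3 respectively. Then for any p, q ∈ ℝ, the cross-term coefficient of pq in (s₁·(p,q))(s₂·(p,q)) + (s₁'·(p,q))(s₂'·(p,q)) + (s₁''·(p,q))(s₂''·(p,q)) vanishes, so the sum has the form μ₁p² + μ₂q² with μ₁, μ₂ independent of p, q. -/
import Mathlib


/-- Rotation of the plane by the angle θ about the origin. -/
noncomputable def rot (θ : ℝ) (v : ℝ × ℝ) : ℝ × ℝ :=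
  (Real.cos θ * v.1 - Real.sin θ * v.2, Real.sin θ * v.1 + Real.cos θ * v.2)

noncomputable def e₁ : ℝ × ℝ := ((1 : ℝ), (0 : ℝ))
noncomputable def e₂ : ℝ × ℝ := ((1/2 : ℝ), Real.sqrt 3 / 2)

/-- dot product with (p,q) -/
def dotPQ (v : ℝ × ℝ) (p q : ℝ) : ℝ := v.1 * p + v.2 * q

theorem stmt_8 (b₁ b₂ b₃ b₄ : ℝ) :
    ∃ mu₁ mu₂ : ℝ, ∀ p q : ℝ,
      dotPQ (b₁ • e₁ + b₂ • e₂) p q * dotPQ (b₃ • e₁ + b₄ • e₂) p q +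
      dotPQ (rot (2 * Real.pi / 3) (b₁ • e₁ + b₂ • e₂)) p q *
        dotPQ (rot (2 * Real.pi / 3) (b₃ • e₁ + b₄ • e₂)) p q +
      dotPQ (rot (4 * Real.pi / 3) (b₁ • e₁ + b₂ • e₂)) p q *
        dotPQ (rot (4 * Real.pi / 3) (b₃ • e₁ + b₄ • e₂)) p q
      = mu₁ * p ^ 2 + mu₂ * q ^ 2 := by
  set s : ℝ := Real.sqrt 3 with hsdef
  have hs : s ^ 2 = 3 := Real.sq_sqrt (by norm_num)
  have hc2 : Real.cos (2 * Real.pi / 3) = -(1/2) := by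
    rw [show (2 * Real.pi / 3 : ℝ) = Real.pi - Real.pi / 3 by ring,
      Real.cos_pi_sub, Real.cos_pi_div_three]
  have hs2 : Real.sin (2 * Real.pi / 3) = s / 2 := by
    rw [show (2 * Real.pi / 3 : ℝ) = Real.pi - Real.pi / 3 by ring,
      Real.sin_pi_sub, Real.sin_pi_div_three, hsdef]
  have hc4 : Real.cos (4 * Real.pi / 3) = -(1/2) := by
    rw [show (4 * Real.pi / 3 : ℝ) = Real.pi / 3 + Real.pi by ring,
      Real.cos_add_pi, Real.cos_pi_div_three]
  have hs4 : Real.sin (4 * Real.pi / 3) = -(s / 2) := by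
    rw [show (4 * Real.pi / 3 : ℝ) = Real.pi / 3 + Real.pi by ring,
      Real.sin_add_pi, Real.sin_pi_div_three, hsdef]
  refine ⟨3/2 * ((b₁ + b₂/2) * (b₃ + b₄/2)) + s^2 * (3/8) * (b₂ * b₄),
          3/2 * ((b₁ + b₂/2) * (b₃ + b₄/2)) + s^2 * (3/8) * (b₂ * b₄), ?_⟩
  intro p q
  simp only [dotPQ, rot, e₁, e₂, hc2, hs2, hc4, hs4, Prod.fst_add, Prod.snd_add,
    Prod.smul_fst, Prod.smul_snd, smul_eq_mul, ← hsdef]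
  linear_combination ((1/8:ℝ)*b₂*b₄*q*q + (-1/4:ℝ)*b₂*b₄*p*q*s + (1/8:ℝ)*b₂*b₄*p*p*s*s +
    (1/4:ℝ)*b₂*b₃*q*q + (-1/4:ℝ)*b₂*b₃*p*q*s + (1/4:ℝ)*b₁*b₄*q*q +
    (-1/4:ℝ)*b₁*b₄*p*q*s + (1/2:ℝ)*b₁*b₃*q*q) * hs
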